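/- Let $C_n$ be the cycle graph on $n \geq 3$ vertices and let $0 < r < 1$ with $\lfloor rn \rfloor \geq 1$. The minimum number of edges whose removal from $C_n$ leaves every connected component with at most $\lfloor rn \rfloor$ vertices equals $\lfloor (n-1)/\lfloor rn \rfloor \rfloor + 1$. -/

import Mathlib

open SimpleGraph

/-- A graph is in a *failure state* for threshold `k` if every connected
component has order at most `k`. -/
def failureState {V : Type*} (G : SimpleGraph V) (k : ℕ) : Prop :=
  ∀ v : V, (G.connectedComponentMk v).supp.ncard ≤ k

/-- `S` is a vertex disconnecting set: removing the vertices of `S` from `G`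
leaves every component with at most `k` vertices. -/
def vertexDisconnects {V : Type*} (G : SimpleGraph V) (k : ℕ) (S : Set V) : Prop :=
  failureState (G.induce Sᶜ) k

/-- Component order proportion vertex connectivity: minimum size of a vertex
disconnecting set. -/
noncomputable def COv {V : Type*} (G : SimpleGraph V) (k : ℕ) : ℕ :=
  sInf {c | ∃ S : Set V, S.ncard = c ∧ vertexDisconnects G k S}

/-- Component order proportion edge connectivity: minimum size of an edge
disconnecting set. -/
noncomputable def COe {V : Type*} (G : SimpleGraph V) (k : ℕ) : ℕ :=
  sInf {c | ∃ E' : Set (Sym2 V), E' ⊆ G.edgeSet ∧ E'.ncard = c ∧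
    failureState (G.deleteEdges E') k}

/-- Minimum of `COv` over all graphs with `n` vertices and `m` edges. -/
noncomputable def gminV (n k m : ℕ) : ℕ :=
  sInf {c | ∃ G : SimpleGraph (Fin n), G.edgeSet.ncard = m ∧ COv G k = c}

/-- Minimum of `COe` over all graphs with `n` vertices and `m` edges. -/
noncomputable def gminE (n k m : ℕ) : ℕ :=
  sInf {c | ∃ G : SimpleGraph (Fin n), G.edgeSet.ncard = m ∧ COe G k = c}

open Fin.NatCast in
lemma cycle_coe_aux (N k : ℕ) (hk1 : 1 ≤ k) (hkn : k < N + 3) :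
    COe (cycleGraph (N + 3)) k = (N + 2) / k + 1 := by
  classical
  obtain ⟨m, hmdef⟩ : ∃ m : ℕ, m = (N + 2) / k + 1 := ⟨_, rfl⟩
  -- basic arithmetic facts
  have hdm := Nat.div_add_mod (N + 2) k
  have hmod := Nat.mod_lt (N + 2) (show 0 < k by omega)
  have hmk : N + 3 ≤ m * k := by
    have h1 : m * k = k * ((N + 2) / k) + k := by rw [hmdef]; ring
    omega
  have hm1 : 1 ≤ m := by rw [hmdef]; exact Nat.succ_le_succ (Nat.zero_le _)
  have hm1k : (m - 1) * k ≤ N + 2 := by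
    have h0 : m - 1 = (N + 2) / k := by rw [hmdef]; simp
    have h1 : (m - 1) * k = k * ((N + 2) / k) := by rw [h0]; ring
    omega
  -- successor values in Fin (N+3)
  have hsucc : ∀ x : Fin (N+3), (x+1).val = if x.val = N+2 then 0 else x.val + 1 := by
    intro x
    have hx := x.isLt
    rw [Fin.val_add, Fin.val_one]
    split <;> rename_i h'
    · rw [show x.val + 1 = N+3 by omega, Nat.mod_self]
    · exact Nat.mod_eq_of_lt (by omega)
  -- injectivity of v ↦ s(v, v+1)
  have hsym : ∀ a b : Fin (N+3), s(a, a+1) = s(b, b+1) → a = b := by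
    intro a b h
    rcases Sym2.eq_iff.mp h with ⟨h1, _⟩ | ⟨h1, h2⟩
    · exact h1
    · apply Fin.ext
      have e1 := congrArg Fin.val h1
      have e2 := congrArg Fin.val h2
      rw [hsucc] at e1 e2
      have ha := a.isLt
      have hb := b.isLt
      split_ifs at e1 e2 <;> omega
  have hadjsucc : ∀ v : Fin (N+3), (cycleGraph (N+3)).Adj v (v+1) := by
    intro v
    rw [cycleGraph_adj]
    right
    exact add_sub_cancel_left v 1
  -- the cut function
  obtain ⟨c, hcval⟩ : ∃ c : ℕ → Fin (N+3), ∀ j, (c j).val = min ((j+1)*k) (N+3) - 1 :=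
    ⟨fun j => ⟨min ((j+1)*k) (N+3) - 1, by omega⟩, fun j => rfl⟩
  have hcmono : ∀ j1 j2, j1 < j2 → j2 < m → (c j1).val < (c j2).val := by
    intro j1 j2 h12 h2m
    have e0 : 1*k ≤ (j1+1)*k := Nat.mul_le_mul_right k (by omega)
    have e1 : (j1+1)*k ≤ (m-1)*k := Nat.mul_le_mul_right k (by omega)
    have e2 : (j1+2)*k ≤ (j2+1)*k := Nat.mul_le_mul_right k (by omega)
    have e3 : (j1+2)*k = (j1+1)*k + k := by ring
    have e4 : 1*k = k := by ring
    rw [hcval, hcval]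
    omega
  obtain ⟨E', hE'def⟩ : ∃ E' : Set (Sym2 (Fin (N+3))),
      E' = (fun j => s(c j, c j + 1)) '' Set.Iio m := ⟨_, rfl⟩
  have hmemE' : ∀ j, j < m → s(c j, c j + 1) ∈ E' := by
    intro j hj
    rw [hE'def]
    exact ⟨j, hj, rfl⟩
  -- cut membership
  have hcut : ∀ v : Fin (N+3), (v.val = N+2 ∨ k ∣ (v.val + 1)) → s(v, v+1) ∈ E' := by
    intro v hv
    rcases hv with hv | ⟨t, ht⟩
    · have hc1 : c (m-1) = v := by
        apply Fin.ext
        rw [hcval, show m - 1 + 1 = m by omega, hv]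
        omega
      have := hmemE' (m-1) (by omega)
      rwa [hc1] at this
    · have hvlt := v.isLt
      have ht1 : 1 ≤ t := by
        rcases Nat.eq_zero_or_pos t with rfl | h
        · omega
        · exact h
      have htm : t ≤ m := by
        refine Nat.le_of_mul_le_mul_left ?_ (show 0 < k by omega)
        calc k * t = v.val + 1 := ht.symm
          _ ≤ m * k := by omega
          _ = k * m := by ring
      have htk : t * k = v.val + 1 := by rw [ht]; ring
      have htk2 : t * k ≤ m * k := Nat.mul_le_mul_right k htm
      have hc1 : c (t-1) = v := by
        apply Fin.ext
        rw [hcval, show t - 1 + 1 = t by omega]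
        omega
      have := hmemE' (t-1) (by omega)
      rwa [hc1] at this
  -- upper bound: m is achieved
  have hmem : m ∈ {c_ | ∃ E'' : Set (Sym2 (Fin (N+3))), E'' ⊆ (cycleGraph (N+3)).edgeSet ∧
      E''.ncard = c_ ∧ failureState ((cycleGraph (N+3)).deleteEdges E'') k} := by
    refine ⟨E', ?_, ?_, ?_⟩
    · rw [hE'def]
      rintro e ⟨j, _, rfl⟩
      exact hadjsucc (c j)
    · rw [hE'def, Set.ncard_image_of_injOn, ← Finset.coe_range,
        Set.ncard_coe_finset, Finset.card_range]
      intro a ha b hb hab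
      have hcc := hsym _ _ hab
      simp only [Set.mem_Iio] at ha hb
      rcases lt_trichotomy a b with h | h | h
      · exact absurd (congrArg Fin.val hcc) (by have := hcmono a b h hb; omega)
      · exact h
      · exact absurd (congrArg Fin.val hcc) (by have := hcmono b a h ha; omega)
    · -- failure state
      intro v
      have hstepblk : ∀ w : Fin (N+3), s(w, w+1) ∉ E' → w.val / k = (w+1).val / k := by
        intro w hnw
        have h1 : w.val ≠ N+2 := fun h => hnw (hcut w (Or.inl h))
        have h2 : ¬ k ∣ w.val + 1 := fun h => hnw (hcut w (Or.inr h))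
        have hv1 : (w+1).val = w.val + 1 := by rw [hsucc, if_neg h1]
        rw [hv1, Nat.succ_div, if_neg h2]
        exact (Nat.add_zero _).symm
      have hkey : ∀ a b : Fin (N+3), ((cycleGraph (N+3)).deleteEdges E').Adj a b →
          a.val / k = b.val / k := by
        intro a b hab
        rw [deleteEdges_adj] at hab
        obtain ⟨hc1, hne⟩ := hab
        rw [cycleGraph_adj] at hc1
        rcases hc1 with h | h
        · have hab' : a = b + 1 := sub_eq_iff_eq_add'.mp h
          subst hab'
          exact (hstepblk b (fun hmem' => hne (by rwa [Sym2.eq_swap]))).symm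
        · have hab' : b = a + 1 := sub_eq_iff_eq_add'.mp h
          subst hab'
          exact hstepblk a hne
      have hreach : ∀ a b : Fin (N+3), ((cycleGraph (N+3)).deleteEdges E').Reachable a b →
          a.val / k = b.val / k := by
        intro a b h
        obtain ⟨p⟩ := h
        induction p with
        | nil => rfl
        | cons h p ih => exact (hkey _ _ h).trans ih
      have hsub2 : (((cycleGraph (N+3)).deleteEdges E').connectedComponentMk v).supp ⊆
          {w : Fin (N+3) | w.val / k = v.val / k} := by
        intro w hw
        rw [ConnectedComponent.mem_supp_iff, ConnectedComponent.eq] at hw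
        exact hreach w v hw
      refine le_trans (Set.ncard_le_ncard hsub2 (Set.toFinite _)) ?_
      have hIio : (Set.Iio k : Set ℕ).ncard = k := by
        rw [← Finset.coe_range, Set.ncard_coe_finset, Finset.card_range]
      refine le_trans (Set.ncard_le_ncard_of_injOn (fun w => w.val % k) ?_ ?_
        (Set.finite_Iio k)) hIio.le
      · intro w _
        exact Nat.mod_lt _ (by omega)
      · intro a ha b hb hab
        simp only [Set.mem_setOf_eq] at ha hb hab
        apply Fin.ext
        have e1 := Nat.div_add_mod a.val k
        have e2 := Nat.div_add_mod b.val k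
        have e3 : k * (a.val / k) = k * (b.val / k) := by rw [ha, hb]
        omega
  -- lower bound
  have hlow : ∀ c_ ∈ {c_ | ∃ E'' : Set (Sym2 (Fin (N+3))),
      E'' ⊆ (cycleGraph (N+3)).edgeSet ∧ E''.ncard = c_ ∧
      failureState ((cycleGraph (N+3)).deleteEdges E'') k}, m ≤ c_ := by
    rintro c_ ⟨F, hFsub, hFcard, hfail⟩
    have hDc : {v : Fin (N+3) | s(v, v+1) ∈ F}.ncard ≤ c_ := by
      rw [← hFcard]
      exact Set.ncard_le_ncard_of_injOn (fun v => s(v, v+1)) (fun v hv => hv)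
        (fun a _ b _ h => hsym a b h) (Set.toFinite F)
    haveI : Finite ((cycleGraph (N+3)).deleteEdges F).ConnectedComponent := Quot.finite _
    haveI : Fintype ((cycleGraph (N+3)).deleteEdges F).ConnectedComponent := Fintype.ofFinite _
    -- every component meets D
    have hex : ∀ K : ((cycleGraph (N+3)).deleteEdges F).ConnectedComponent,
        ∃ v, ((cycleGraph (N+3)).deleteEdges F).connectedComponentMk v = K ∧
          v ∈ {v : Fin (N+3) | s(v, v+1) ∈ F} := by
      intro K
      by_contra hcon
      push_neg at hcon
      obtain ⟨u, hu0⟩ := K.exists_rep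
      have hu : ((cycleGraph (N+3)).deleteEdges F).connectedComponentMk u = K := hu0
      have hstep : ∀ v : Fin (N+3),
          ((cycleGraph (N+3)).deleteEdges F).connectedComponentMk v = K →
          ((cycleGraph (N+3)).deleteEdges F).connectedComponentMk (v+1) = K := by
        intro v hv
        have hvD := hcon v hv
        simp only [Set.mem_setOf_eq] at hvD
        have hadj : ((cycleGraph (N+3)).deleteEdges F).Adj v (v+1) := by
          rw [deleteEdges_adj]
          exact ⟨hadjsucc v, hvD⟩
        rw [← hv]
        exact (ConnectedComponent.connectedComponentMk_eq_of_adj hadj).symm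
      have hall : ∀ j : ℕ,
          ((cycleGraph (N+3)).deleteEdges F).connectedComponentMk (u + (j : Fin (N+3))) = K := by
        intro j
        induction j with
        | zero => simpa using hu
        | succ j ih =>
          have hcast : ((j+1 : ℕ) : Fin (N+3)) = (j : Fin (N+3)) + 1 := by push_cast; ring
          rw [hcast, ← add_assoc]
          exact hstep _ ih
      have huniv : ∀ w : Fin (N+3),
          ((cycleGraph (N+3)).deleteEdges F).connectedComponentMk w = K := by
        intro w
        have := hall (w - u).val
        rwa [Fin.cast_val_eq_self, add_comm u (w - u), sub_add_cancel] at this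
      have hsupp : (((cycleGraph (N+3)).deleteEdges F).connectedComponentMk u).supp
          = Set.univ := by
        ext w
        simp only [ConnectedComponent.mem_supp_iff, Set.mem_univ, iff_true]
        rw [huniv w, hu]
      have hcard := hfail u
      rw [hsupp, Set.ncard_univ, Nat.card_eq_fintype_card, Fintype.card_fin] at hcard
      omega
    choose f hf1 hf2 using hex
    have hcomps : Fintype.card ((cycleGraph (N+3)).deleteEdges F).ConnectedComponent ≤
        {v : Fin (N+3) | s(v, v+1) ∈ F}.ncard := by
      have h := Set.ncard_le_ncard_of_injOn (s := Set.univ) f (fun K _ => hf2 K)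
        (fun a _ b _ h => by rw [← hf1 a, h, hf1 b]) (Set.toFinite _)
      simpa [Set.ncard_univ, Nat.card_eq_fintype_card] using h
    -- each fiber has size ≤ k, so n ≤ card * k
    have hfiber : ∀ K : ((cycleGraph (N+3)).deleteEdges F).ConnectedComponent,
        (Finset.univ.filter
          fun v => ((cycleGraph (N+3)).deleteEdges F).connectedComponentMk v = K).card ≤ k := by
      intro K
      obtain ⟨u, hu0⟩ := K.exists_rep
      have hu : ((cycleGraph (N+3)).deleteEdges F).connectedComponentMk u = K := hu0
      have hset : ((Finset.univ.filter
          fun v => ((cycleGraph (N+3)).deleteEdges F).connectedComponentMk v = K :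
            Finset (Fin (N+3))) : Set (Fin (N+3)))
          = (((cycleGraph (N+3)).deleteEdges F).connectedComponentMk u).supp := by
        ext w
        simp [ConnectedComponent.mem_supp_iff, hu]
      calc (Finset.univ.filter
          fun v => ((cycleGraph (N+3)).deleteEdges F).connectedComponentMk v = K).card
          = ((Finset.univ.filter
          fun v => ((cycleGraph (N+3)).deleteEdges F).connectedComponentMk v = K :
            Finset (Fin (N+3))) : Set (Fin (N+3))).ncard := (Set.ncard_coe_finset _).symm
        _ = (((cycleGraph (N+3)).deleteEdges F).connectedComponentMk u).supp.ncard := by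
            rw [hset]
        _ ≤ k := hfail u
    have hsum : (N + 3 : ℕ) = ∑ K : ((cycleGraph (N+3)).deleteEdges F).ConnectedComponent,
        (Finset.univ.filter
          fun v => ((cycleGraph (N+3)).deleteEdges F).connectedComponentMk v = K).card := by
      have := Finset.card_eq_sum_card_fiberwise
        (s := (Finset.univ : Finset (Fin (N+3))))
        (f := fun v : Fin (N+3) => ((cycleGraph (N+3)).deleteEdges F).connectedComponentMk v)
        (t := Finset.univ) (fun v _ => Finset.mem_univ _)
      simpa using this
    have hnk : N + 3 ≤ Fintype.card ((cycleGraph (N+3)).deleteEdges F).ConnectedComponent * k := by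
      calc (N + 3 : ℕ) = _ := hsum
        _ ≤ ∑ _K : ((cycleGraph (N+3)).deleteEdges F).ConnectedComponent, k :=
            Finset.sum_le_sum fun K _ => hfiber K
        _ = Fintype.card ((cycleGraph (N+3)).deleteEdges F).ConnectedComponent * k := by
            rw [Finset.sum_const, smul_eq_mul, Finset.card_univ]
    have hmcard : m ≤ Fintype.card ((cycleGraph (N+3)).deleteEdges F).ConnectedComponent := by
      have hlt : (N+2)/k < Fintype.card ((cycleGraph (N+3)).deleteEdges F).ConnectedComponent :=
        (Nat.div_lt_iff_lt_mul (show 0 < k by omega)).mpr (by omega)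
      omega
    omega
  -- conclude
  have hrfl : COe (cycleGraph (N+3)) k = sInf {c_ | ∃ E'' : Set (Sym2 (Fin (N+3))),
      E'' ⊆ (cycleGraph (N+3)).edgeSet ∧ E''.ncard = c_ ∧
      failureState ((cycleGraph (N+3)).deleteEdges E'') k} := rfl
  rw [hrfl, hmdef] at *
  exact le_antisymm (Nat.sInf_le hmem) (le_csInf ⟨_, hmem⟩ hlow)

theorem cycleCOe (n : ℕ) (hn : 3 ≤ n) (r : ℝ) (hr0 : 0 < r) (hr1 : r < 1)
    (hk : 1 ≤ ⌊r * n⌋₊) :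
    COe (cycleGraph n) ⌊r * n⌋₊ = (n - 1) / ⌊r * n⌋₊ + 1 := by
  have hkn : ⌊r * n⌋₊ < n := by
    have h0 : (0:ℝ) ≤ r * n := by positivity
    have hn0 : (0:ℝ) < (n:ℝ) := by exact_mod_cast (by omega : 0 < n)
    have hlt : r * n < (n:ℝ) := by nlinarith
    exact (Nat.floor_lt h0).mpr (by exact_mod_cast hlt)
  obtain ⟨N, rfl⟩ : ∃ N, n = N + 3 := ⟨n - 3, by omega⟩
  exact cycle_coe_aux N ⌊r * ((N+3 : ℕ) : ℝ)⌋₊ hk hkn
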